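/- Any two countable atomic models of a complete countable first-order theory are isomorphic. -/

import Mathlib

open FirstOrder FirstOrder.Language
open FirstOrder.Language.Structure

/-- A formula (in `n` free variables) is consistent with the theory `T` if it is realized by
some tuple in some model of `T`. -/
def ConsistentWith {L : FirstOrder.Language.{0,0}} (T : L.Theory) {n : ℕ} (φ : L.Formula (Fin n)) : Prop :=
  ∃ (M : Theory.ModelType.{0,0,0} T) (v : Fin n → M), φ.Realize v

/-- `φ` isolates a complete type in `T`: `T ∪ {∃x̄ φ}` is consistent, and for every formula `ψ`
in the same variables, either `T ⊢ φ → ψ` or `T ⊢ φ → ¬ψ` (semantically). -/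
def Isolates {L : FirstOrder.Language.{0,0}} (T : L.Theory) {n : ℕ} (φ : L.Formula (Fin n)) : Prop :=
  ConsistentWith T φ ∧
    ∀ ψ : L.Formula (Fin n),
      (∀ (M : Theory.ModelType.{0,0,0} T) (v : Fin n → M), φ.Realize v → ψ.Realize v) ∨
      (∀ (M : Theory.ModelType.{0,0,0} T) (v : Fin n → M), φ.Realize v → ¬ ψ.Realize v)

/-- The isolated types are dense in `T`: every formula consistent with `T` is implied, modulo
`T`, by a formula isolating a complete type. -/
def IsolatedTypesDense {L : FirstOrder.Language.{0,0}} (T : L.Theory) : Prop :=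
  ∀ (n : ℕ) (φ : L.Formula (Fin n)), ConsistentWith T φ →
    ∃ θ : L.Formula (Fin n), Isolates T θ ∧
      ∀ (M : Theory.ModelType.{0,0,0} T) (v : Fin n → M), θ.Realize v → φ.Realize v

/-- `M` is an atomic model of `T`: `M ⊨ T` and the type of every finite tuple from `M`
is isolated in `T`. -/
def IsAtomicModel {L : FirstOrder.Language.{0,0}} (T : L.Theory) (M : Type*) [L.Structure M] : Prop :=
  M ⊨ T ∧ ∀ (n : ℕ) (a : Fin n → M), ∃ φ : L.Formula (Fin n), φ.Realize a ∧ Isolates T φ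

section BackAndForth

variable {L : FirstOrder.Language.{0,0}} {M N : Type} [L.Structure M] [L.Structure N]

/-- Two tuples have the same complete type. -/
def SameType (L : FirstOrder.Language.{0,0}) {M N : Type} [L.Structure M] [L.Structure N]
    {n : ℕ} (a : Fin n → M) (b : Fin n → N) : Prop :=
  ∀ φ : L.Formula (Fin n), φ.Realize a ↔ φ.Realize b

theorem SameType.symm {n : ℕ} {a : Fin n → M} {b : Fin n → N} (h : SameType L a b) :
    SameType L b a := fun φ => (h φ).symm

/-- the map collapsing the last variable for existential quantification -/
def lastMap (n : ℕ) : Fin (n+1) → Fin n ⊕ Unit :=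
  fun i => Fin.lastCases (Sum.inr ()) Sum.inl i

theorem lastMap_elim {P : Type} (v : Fin n → P) (x : Unit → P) :
    (fun a => Sum.elim v x (lastMap n a)) = Fin.snoc v (x ()) := by
  funext a
  induction a using Fin.lastCases with
  | last => simp [lastMap, Fin.snoc_last]
  | cast j => simp [lastMap, Fin.snoc_castSucc]

theorem sameType_default (T : L.Theory) (hT : T.IsComplete)
    [Nonempty M] [Nonempty N] (hMT : M ⊨ T) (hNT : N ⊨ T) :
    SameType L (fun i : Fin 0 => (i.elim0 : M)) (fun i : Fin 0 => (i.elim0 : N)) := by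
  intro φ
  haveI := hMT; haveI := hNT
  set ψ : L.Sentence := φ.relabel (fun x : Fin 0 => x.elim0) with hψ
  have key : ∀ (P : Type) [L.Structure P] (v : Fin 0 → P), φ.Realize v ↔ ψ.Realize P := by
    intro P _ v
    rw [hψ, Sentence.Realize, Formula.realize_relabel]
    exact iff_of_eq (congrArg _ (Subsingleton.elim _ _))
  rw [key M, key N]
  rcases hT.2 ψ with h | h
  · exact iff_of_true (h.realize_sentence M) (h.realize_sentence N)
  · have h1 := h.realize_sentence M
    have h2 := h.realize_sentence N
    rw [Sentence.realize_not] at h1 h2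
    exact iff_of_false h1 h2

theorem extend_lemma (T : L.Theory) [Nonempty M] [Nonempty N]
    (hMT : M ⊨ T) (hNT : N ⊨ T)
    (hMa : ∀ (n : ℕ) (a : Fin n → M), ∃ φ : L.Formula (Fin n), φ.Realize a ∧ Isolates T φ)
    {n : ℕ} {a : Fin n → M} {b : Fin n → N} (h : SameType L a b) (m : M) :
    ∃ x : N, SameType L (Fin.snoc a m) (Fin.snoc b x) := by
  classical
  haveI := hMT; haveI := hNT
  obtain ⟨φ, hφa, hφiso⟩ := hMa (n+1) (Fin.snoc a m)
  have h1 : ((φ.relabel (lastMap n)).iExs Unit).Realize a := by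
    rw [Formula.realize_iExs]
    exact ⟨fun _ => m, by rw [Formula.realize_relabel, Function.comp_def, lastMap_elim]; exact hφa⟩
  have h2 := (h _).1 h1
  rw [Formula.realize_iExs] at h2
  obtain ⟨x, hx⟩ := h2
  rw [Formula.realize_relabel, Function.comp_def, lastMap_elim] at hx
  refine ⟨x (), fun ψ => ?_⟩
  rcases hφiso.2 ψ with hψ | hψ
  · exact iff_of_true (hψ (Theory.ModelType.of T M) _ hφa) (hψ (Theory.ModelType.of T N) _ hx)
  · exact iff_of_false (hψ (Theory.ModelType.of T M) _ hφa) (hψ (Theory.ModelType.of T N) _ hx)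

variable (L) (M) (N) in
structure Approx (k : ℕ) : Type where
  a : Fin (2*k) → M
  b : Fin (2*k) → N
  same : SameType L a b

section Seq
variable [Nonempty M] [Nonempty N] (T : L.Theory)
  (hMT : M ⊨ T) (hNT : N ⊨ T)
  (hMa : ∀ (n : ℕ) (a : Fin n → M), ∃ φ : L.Formula (Fin n), φ.Realize a ∧ Isolates T φ)
  (hNa : ∀ (n : ℕ) (b : Fin n → N), ∃ φ : L.Formula (Fin n), φ.Realize b ∧ Isolates T φ)

noncomputable def step (m : M) (y : N) {k : ℕ} (p : Approx L M N k) : Approx L M N (k+1) :=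
  let h1 := extend_lemma T hMT hNT hMa p.same m
  let x := Classical.choose h1
  let hx : SameType L (Fin.snoc p.a m) (Fin.snoc p.b x) := Classical.choose_spec h1
  let h2 := extend_lemma T hNT hMT hNa hx.symm y
  let m' := Classical.choose h2
  let hm' := Classical.choose_spec h2
  ⟨Fin.snoc (Fin.snoc p.a m) m', Fin.snoc (Fin.snoc p.b x) y, hm'.symm⟩

theorem step_a_cast (m : M) (y : N) {k : ℕ} (p : Approx L M N k) (i : Fin (2*k)) :
    (step T hMT hNT hMa hNa m y p).a i.castSucc.castSucc = p.a i := by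
  simp only [step]
  rw [Fin.snoc_castSucc, Fin.snoc_castSucc]

theorem step_b_cast (m : M) (y : N) {k : ℕ} (p : Approx L M N k) (i : Fin (2*k)) :
    (step T hMT hNT hMa hNa m y p).b i.castSucc.castSucc = p.b i := by
  simp only [step]
  rw [Fin.snoc_castSucc, Fin.snoc_castSucc]

theorem step_a_new (m : M) (y : N) {k : ℕ} (p : Approx L M N k) :
    (step T hMT hNT hMa hNa m y p).a ((Fin.last (2*k)).castSucc) = m := by
  simp only [step]
  rw [Fin.snoc_castSucc]
  exact Fin.snoc_last _ _

theorem step_b_new (m : M) (y : N) {k : ℕ} (p : Approx L M N k) :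
    (step T hMT hNT hMa hNa m y p).b (Fin.last (2*k+1)) = y := by
  simp only [step]
  exact Fin.snoc_last _ _

noncomputable def seq (base : Approx L M N 0) (em : ℕ → M) (en : ℕ → N) : ∀ k : ℕ, Approx L M N k
  | 0 => base
  | (k+1) => step T hMT hNT hMa hNa (em k) (en k) (seq base em en k)
end Seq

section Seq2
variable [Nonempty M] [Nonempty N] (T : L.Theory)
  (hMT : M ⊨ T) (hNT : N ⊨ T)
  (hMa : ∀ (n : ℕ) (a : Fin n → M), ∃ φ : L.Formula (Fin n), φ.Realize a ∧ Isolates T φ)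
  (hNa : ∀ (n : ℕ) (b : Fin n → N), ∃ φ : L.Formula (Fin n), φ.Realize b ∧ Isolates T φ)
  (base : Approx L M N 0) (em : ℕ → M) (en : ℕ → N)

theorem seq_succ (k : ℕ) :
    seq T hMT hNT hMa hNa base em en (k+1)
      = step T hMT hNT hMa hNa (em k) (en k) (seq T hMT hNT hMa hNa base em en k) := rfl

theorem seq_a_eq (j k i : ℕ) (hjk : j ≤ k) (hi : i < 2*j) :
    (seq T hMT hNT hMa hNa base em en k).a ⟨i, by omega⟩
      = (seq T hMT hNT hMa hNa base em en j).a ⟨i, hi⟩ := by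
  induction k, hjk using Nat.le_induction with
  | base => rfl
  | succ k hk ih =>
    have h2k : i < 2*k := by omega
    have e : (⟨i, by omega⟩ : Fin (2*(k+1)))
        = ((⟨i, h2k⟩ : Fin (2*k)).castSucc.castSucc) := Fin.ext (by simp)
    rw [seq_succ, e, step_a_cast]
    exact ih

theorem seq_b_eq (j k i : ℕ) (hjk : j ≤ k) (hi : i < 2*j) :
    (seq T hMT hNT hMa hNa base em en k).b ⟨i, by omega⟩
      = (seq T hMT hNT hMa hNa base em en j).b ⟨i, hi⟩ := by
  induction k, hjk using Nat.le_induction with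
  | base => rfl
  | succ k hk ih =>
    have h2k : i < 2*k := by omega
    have e : (⟨i, by omega⟩ : Fin (2*(k+1)))
        = ((⟨i, h2k⟩ : Fin (2*k)).castSucc.castSucc) := Fin.ext (by simp)
    rw [seq_succ, e, step_b_cast]
    exact ih

end Seq2


end BackAndForth

/-- any two countable atomic models of a complete countable first-order theory
are isomorphic. -/
theorem statement1 {L : FirstOrder.Language.{0,0}} [Countable L.Symbols] (T : L.Theory)
    (hT : T.IsComplete) (M N : Type) [L.Structure M] [L.Structure N]
    [Countable M] [Countable N] [Nonempty M] [Nonempty N]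
    (hM : IsAtomicModel T M) (hN : IsAtomicModel T N) :
    Nonempty (M ≃[L] N) := by
  classical
  obtain ⟨hMT, hMa⟩ := hM
  obtain ⟨hNT, hNa⟩ := hN
  obtain ⟨em, hem⟩ := exists_surjective_nat M
  obtain ⟨en, hen⟩ := exists_surjective_nat N
  let base : Approx L M N 0 :=
    ⟨fun i => i.elim0, fun i => i.elim0, sameType_default T hT hMT hNT⟩
  set S := seq T hMT hNT hMa hNa base em en with hS
  set A : ℕ → M := fun i => (S (i+1)).a ⟨i, by omega⟩ with hA
  set B : ℕ → N := fun i => (S (i+1)).b ⟨i, by omega⟩ with hB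
  have A_eq : ∀ (k i : ℕ) (h : i < 2*k), A i = (S k).a ⟨i, h⟩ := by
    intro k i h
    have h1 := seq_a_eq T hMT hNT hMa hNa base em en (i+1) (max (i+1) k) i (le_max_left _ _) (by omega)
    have h2 := seq_a_eq T hMT hNT hMa hNa base em en k (max (i+1) k) i (le_max_right _ _) h
    exact h1.symm.trans h2
  have B_eq : ∀ (k i : ℕ) (h : i < 2*k), B i = (S k).b ⟨i, h⟩ := by
    intro k i h
    have h1 := seq_b_eq T hMT hNT hMa hNa base em en (i+1) (max (i+1) k) i (le_max_left _ _) (by omega)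
    have h2 := seq_b_eq T hMT hNT hMa hNa base em en k (max (i+1) k) i (le_max_right _ _) h
    exact h1.symm.trans h2
  -- the key transfer principle
  have key : ∀ (n : ℕ) (φ : L.Formula (Fin n)) (g : Fin n → ℕ),
      φ.Realize (fun i => A (g i)) ↔ φ.Realize (fun i => B (g i)) := by
    intro n φ g
    set k := (Finset.univ.sup g) + 1 with hk
    have hg : ∀ i, g i < 2*k := by
      intro i
      have := Finset.le_sup (f := g) (Finset.mem_univ i)
      omega
    set g' : Fin n → Fin (2*k) := fun i => ⟨g i, hg i⟩ with hg'
    have hAr : (fun i : Fin (2*k) => A i) = (S k).a := funext fun i => A_eq k i i.isLt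
    have hBr : (fun i : Fin (2*k) => B i) = (S k).b := funext fun i => B_eq k i i.isLt
    have e1 : φ.Realize (fun i => A (g i)) ↔ (φ.relabel g').Realize (fun i : Fin (2*k) => A i) := by
      rw [Formula.realize_relabel]; exact Iff.rfl
    have e2 : φ.Realize (fun i => B (g i)) ↔ (φ.relabel g').Realize (fun i : Fin (2*k) => B i) := by
      rw [Formula.realize_relabel]; exact Iff.rfl
    rw [e1, e2, hAr, hBr]
    exact (S k).same _
  -- surjectivity of the enumerations
  have A_surj : ∀ m : M, ∃ i, A i = m := by
    intro m
    obtain ⟨k, rfl⟩ := hem m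
    refine ⟨2*k, ?_⟩
    have h1 : A (2*k) = (S (k+1)).a ⟨2*k, by omega⟩ := A_eq (k+1) (2*k) (by omega)
    have h2 := step_a_new T hMT hNT hMa hNa (em k) (en k) (S k)
    rw [h1, hS, seq_succ]
    exact h2
  have B_surj : ∀ y : N, ∃ i, B i = y := by
    intro y
    obtain ⟨k, rfl⟩ := hen y
    refine ⟨2*k+1, ?_⟩
    have h1 : B (2*k+1) = (S (k+1)).b ⟨2*k+1, by omega⟩ := B_eq (k+1) (2*k+1) (by omega)
    have h2 := step_b_new T hMT hNT hMa hNa (em k) (en k) (S k)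
    rw [h1, hS, seq_succ]
    exact h2
  -- the equality transfer
  have AB : ∀ i j : ℕ, A i = A j ↔ B i = B j := by
    intro i j
    have := key 2 (Term.equal (Term.var 0) (Term.var 1)) ![i, j]
    simpa [Formula.realize_equal, Term.realize_var] using this
  -- the bijection
  set f : M → N := fun m => B (Classical.choose (A_surj m)) with hf
  have hfA : ∀ m : M, A (Classical.choose (A_surj m)) = m := fun m => Classical.choose_spec (A_surj m)
  have f_A : ∀ i : ℕ, f (A i) = B i := fun i => (AB _ i).1 (hfA (A i))
  have finj : Function.Injective f := by
    intro m1 m2 h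
    have := (AB (Classical.choose (A_surj m1)) (Classical.choose (A_surj m2))).2 h
    rwa [hfA, hfA] at this
  have fsurj : Function.Surjective f := by
    intro y
    obtain ⟨j, hj⟩ := B_surj y
    exact ⟨A j, (f_A j).trans hj⟩
  refine ⟨⟨Equiv.ofBijective f ⟨finj, fsurj⟩, ?_, ?_⟩⟩
  · intro l F x
    set kf : Fin l → ℕ := fun i => Classical.choose (A_surj (x i)) with hkf
    have hkx : ∀ i, A (kf i) = x i := fun i => Classical.choose_spec (A_surj (x i))
    set k' : ℕ := Classical.choose (A_surj (funMap F x)) with hk'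
    have hk'x : A k' = funMap F x := Classical.choose_spec (A_surj (funMap F x))
    set φ : L.Formula (Fin (l+1)) :=
      Term.equal (Term.func F (fun i => Term.var i.castSucc)) (Term.var (Fin.last l)) with hφ
    set g2 : Fin (l+1) → ℕ := Fin.snoc kf k' with hg2
    have h1 : φ.Realize (fun i => A (g2 i)) := by
      simp only [hφ, Formula.realize_equal, Term.realize_func, Term.realize_var,
        hg2, Fin.snoc_castSucc, Fin.snoc_last, hkx, hk'x]
    have h2 := (key _ φ g2).1 h1
    simp only [hφ, Formula.realize_equal, Term.realize_func, Term.realize_var,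
      hg2, Fin.snoc_castSucc, Fin.snoc_last] at h2
    show f (funMap F x) = funMap F (f ∘ x)
    have hx : f ∘ x = fun i => B (kf i) := by
      funext i
      rw [Function.comp_apply, ← hkx i, f_A]
    rw [hx, ← hk'x, f_A]
    exact h2.symm
  · intro l R x
    set kf : Fin l → ℕ := fun i => Classical.choose (A_surj (x i)) with hkf
    have hkx : ∀ i, A (kf i) = x i := fun i => Classical.choose_spec (A_surj (x i))
    set φ : L.Formula (Fin l) := R.formula (fun i => Term.var i) with hφ
    have := key l φ kf
    simp only [hφ, Formula.realize_rel, Term.realize_var] at this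
    have hxA : (fun i => A (kf i)) = x := funext hkx
    have hxB : (fun i => B (kf i)) = (f ∘ x) := by
      funext i
      rw [Function.comp_apply, ← hkx i, f_A]
    rw [hxA, hxB] at this
    show RelMap R (f ∘ x) ↔ RelMap R x
    exact this.symm
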